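/- Let w > 0, σ > 0, N ≥ 1, assume D ∩ C_σ is nonempty, fix reference parameters (r_x, r_u), and let (x̊, ů) with x̊ = (x̊_e, x̊_s, x̊_c) be the unique minimizer of V_h over D ∩ C_σ. Then there exists a constant c > 0, depending only on Q and on the strong-convexity modulus of V_h, such that for every x in the feasibility region of HMPC: H*(x; r_x, r_u) − V_h(x̊, ů) ≥ c · ‖x − (x̊_e + x̊_c)‖². In particular, one may take c = (1/2)·min{λ_min(Q), μ/4}, where λ_min(Q) is the smallest eigenvalue of Q and μ > 0 is any constant for which V_h is μ-strongly convex. -/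

import Mathlib

open Matrix Filter

/-- Vectors in `ℝ^n`. -/
abbrev RVec (n : ℕ) := Fin n → ℝ

/-- A parameter triple `(v_e, v_s, v_c) ∈ (ℝ^m)³` of a harmonic signal. -/
abbrev HTriple (n : ℕ) := RVec n × RVec n × RVec n

/-- A parameter pair `((x̂_e, x̂_s, x̂_c), (û_e, û_s, û_c))`. -/
abbrev HParams (nx nu : ℕ) := HTriple nx × HTriple nu

/-- Value at (relative) time `k` of the harmonic signal parameterized by the triple `v`
with frequency `w`: `v_e + v_s sin(w k) + v_c cos(w k)`. -/
noncomputable def hSeq {m : ℕ} (w : ℝ) (v : HTriple m) (k : ℕ) : RVec m :=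
  v.1 + Real.sin (w * (k : ℝ)) • v.2.1 + Real.cos (w * (k : ℝ)) • v.2.2

/-- The transform `T̂_w^m` acting on parameter triples: the identity acts on `v_e` and the
rotation `T_w^m = [[cos w · I, -sin w · I], [sin w · I, cos w · I]]` acts on `(v_s, v_c)`. -/
noncomputable def hatT {m : ℕ} (w : ℝ) (v : HTriple m) : HTriple m :=
  (v.1, Real.cos w • v.2.1 - Real.sin w • v.2.2, Real.sin w • v.2.1 + Real.cos w • v.2.2)

/-- Membership in the set `D` (harmonic parameters consistent with the dynamics `x⁺ = Ax + Bu`). -/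
def inD {nx nu : ℕ} (A : Matrix (Fin nx) (Fin nx) ℝ) (B : Matrix (Fin nx) (Fin nu) ℝ)
    (w : ℝ) (p : HParams nx nu) : Prop :=
  p.1.1 = A.mulVec p.1.1 + B.mulVec p.2.1 ∧
  Real.cos w • p.1.2.1 - Real.sin w • p.1.2.2 = A.mulVec p.1.2.1 + B.mulVec p.2.2.1 ∧
  Real.sin w • p.1.2.1 + Real.cos w • p.1.2.2 = A.mulVec p.1.2.2 + B.mulVec p.2.2.2

/-- Membership in the set `C_σ` (second-order-cone conditions guaranteeing constraint
satisfaction of the harmonic signal). -/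
def inC {nx nu ny : ℕ} (E : Matrix (Fin ny) (Fin nx) ℝ) (F : Matrix (Fin ny) (Fin nu) ℝ)
    (ylo yhi : RVec ny) (σ : ℝ) (p : HParams nx nu) : Prop :=
  ∀ i : Fin ny,
    Real.sqrt ((E.mulVec p.1.2.1 + F.mulVec p.2.2.1) i ^ 2
        + (E.mulVec p.1.2.2 + F.mulVec p.2.2.2) i ^ 2)
      ≤ yhi i - σ - (E.mulVec p.1.1 + F.mulVec p.2.1) i ∧
    Real.sqrt ((E.mulVec p.1.2.1 + F.mulVec p.2.2.1) i ^ 2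
        + (E.mulVec p.1.2.2 + F.mulVec p.2.2.2) i ^ 2)
      ≤ (E.mulVec p.1.1 + F.mulVec p.2.1) i - ylo i - σ

/-- The set `D ∩ C_σ` of admissible harmonic parameters. -/
def paramSet {nx nu ny : ℕ} (A : Matrix (Fin nx) (Fin nx) ℝ) (B : Matrix (Fin nx) (Fin nu) ℝ)
    (E : Matrix (Fin ny) (Fin nx) ℝ) (F : Matrix (Fin ny) (Fin nu) ℝ)
    (ylo yhi : RVec ny) (w σ : ℝ) : Set (HParams nx nu) :=
  {p | inD A B w p ∧ inC E F ylo yhi σ p}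

/-- The quadratic form `‖v‖²_M = vᵀ M v`. -/
def quadForm {n : ℕ} (M : Matrix (Fin n) (Fin n) ℝ) (v : RVec n) : ℝ :=
  v ⬝ᵥ M.mulVec v

/-- The offset cost `V_h` with reference parameters `r` evaluated at parameters `p`. -/
def Vh {nx nu : ℕ} (Te Th : Matrix (Fin nx) (Fin nx) ℝ) (Se Sh : Matrix (Fin nu) (Fin nu) ℝ)
    (r p : HParams nx nu) : ℝ :=
  quadForm Te (p.1.1 - r.1.1) + quadForm Th (p.1.2.1 - r.1.2.1)
    + quadForm Th (p.1.2.2 - r.1.2.2)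
    + quadForm Se (p.2.1 - r.2.1) + quadForm Sh (p.2.2.1 - r.2.2.1)
    + quadForm Sh (p.2.2.2 - r.2.2.2)

/-- `p` is the unique minimizer of `f` on `S`. -/
def IsUniqueMinOn {α : Type*} (f : α → ℝ) (S : Set α) (p : α) : Prop :=
  p ∈ S ∧ ∀ q ∈ S, q ≠ p → f p < f q

/-- `(xs, us, p)` is a feasible solution of the HMPC optimization problem for the state `x`. -/
def FeasSol {nx nu ny : ℕ} (A : Matrix (Fin nx) (Fin nx) ℝ) (B : Matrix (Fin nx) (Fin nu) ℝ)
    (E : Matrix (Fin ny) (Fin nx) ℝ) (F : Matrix (Fin ny) (Fin nu) ℝ)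
    (ylo yhi : RVec ny) (w σ : ℝ) (N : ℕ) (x : RVec nx)
    (xs : ℕ → RVec nx) (us : ℕ → RVec nu) (p : HParams nx nu) : Prop :=
  xs 0 = x ∧
  (∀ k < N, xs (k + 1) = A.mulVec (xs k) + B.mulVec (us k)) ∧
  (∀ k < N, ∀ i, ylo i ≤ (E.mulVec (xs k) + F.mulVec (us k)) i
      ∧ (E.mulVec (xs k) + F.mulVec (us k)) i ≤ yhi i) ∧
  xs N = hSeq w p.1 N ∧
  inD A B w p ∧ inC E F ylo yhi σ p

/-- `x` belongs to the feasibility region of the HMPC optimization problem. -/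
def Feasible {nx nu ny : ℕ} (A : Matrix (Fin nx) (Fin nx) ℝ) (B : Matrix (Fin nx) (Fin nu) ℝ)
    (E : Matrix (Fin ny) (Fin nx) ℝ) (F : Matrix (Fin ny) (Fin nu) ℝ)
    (ylo yhi : RVec ny) (w σ : ℝ) (N : ℕ) (x : RVec nx) : Prop :=
  ∃ xs us p, FeasSol A B E F ylo yhi w σ N x xs us p

/-- The HMPC cost `J` of a solution `(xs, us, p)` with reference parameters `r`. -/
noncomputable def Jcost {nx nu : ℕ} (Q Te Th : Matrix (Fin nx) (Fin nx) ℝ)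
    (R Se Sh : Matrix (Fin nu) (Fin nu) ℝ) (w : ℝ) (N : ℕ) (r : HParams nx nu)
    (xs : ℕ → RVec nx) (us : ℕ → RVec nu) (p : HParams nx nu) : ℝ :=
  (∑ k ∈ Finset.range N,
      (quadForm Q (xs k - hSeq w p.1 k) + quadForm R (us k - hSeq w p.2 k)))
    + Vh Te Th Se Sh r p

/-- `(xs, us, p)` is an optimal solution of the HMPC optimization problem for state `x` and
reference parameters `r`. -/
noncomputable def OptSol {nx nu ny : ℕ} (A : Matrix (Fin nx) (Fin nx) ℝ)
    (B : Matrix (Fin nx) (Fin nu) ℝ)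
    (E : Matrix (Fin ny) (Fin nx) ℝ) (F : Matrix (Fin ny) (Fin nu) ℝ)
    (ylo yhi : RVec ny) (Q Te Th : Matrix (Fin nx) (Fin nx) ℝ)
    (R Se Sh : Matrix (Fin nu) (Fin nu) ℝ) (w σ : ℝ) (N : ℕ) (r : HParams nx nu)
    (x : RVec nx) (xs : ℕ → RVec nx) (us : ℕ → RVec nu) (p : HParams nx nu) : Prop :=
  FeasSol A B E F ylo yhi w σ N x xs us p ∧
  ∀ xs' us' p', FeasSol A B E F ylo yhi w σ N x xs' us' p' →
    Jcost Q Te Th R Se Sh w N r xs us p ≤ Jcost Q Te Th R Se Sh w N r xs' us' p'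

/-- The optimal value `H*(x; r)` of the HMPC optimization problem. -/
noncomputable def Hstar {nx nu ny : ℕ} (A : Matrix (Fin nx) (Fin nx) ℝ)
    (B : Matrix (Fin nx) (Fin nu) ℝ)
    (E : Matrix (Fin ny) (Fin nx) ℝ) (F : Matrix (Fin ny) (Fin nu) ℝ)
    (ylo yhi : RVec ny) (Q Te Th : Matrix (Fin nx) (Fin nx) ℝ)
    (R Se Sh : Matrix (Fin nu) (Fin nu) ℝ) (w σ : ℝ) (N : ℕ) (r : HParams nx nu)
    (x : RVec nx) : ℝ :=
  sInf {J : ℝ | ∃ xs us p, FeasSol A B E F ylo yhi w σ N x xs us p ∧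
    J = Jcost Q Te Th R Se Sh w N r xs us p}

/-- The controllability matrix `[B, AB, …, A^{ν−1}B]` of the pair `(A, B)`. -/
def ctrbMat {nx nu : ℕ} (A : Matrix (Fin nx) (Fin nx) ℝ) (B : Matrix (Fin nx) (Fin nu) ℝ)
    (ν : ℕ) : Matrix (Fin nx) (Fin ν × Fin nu) ℝ :=
  Matrix.of fun i q => ((A ^ (q.1 : ℕ)) * B) i q.2

/-- Squared Euclidean norm of a vector. -/
def nsq {n : ℕ} (v : RVec n) : ℝ := ∑ i, v i ^ 2

/-- Squared Euclidean norm of a parameter pair. -/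
def pNsq {nx nu : ℕ} (p : HParams nx nu) : ℝ :=
  nsq p.1.1 + nsq p.1.2.1 + nsq p.1.2.2 + nsq p.2.1 + nsq p.2.2.1 + nsq p.2.2.2

/-- `f` is `μ`-strongly convex on the parameter space:
`f z − f y ≥ ⟨∇f(y), z − y⟩ + (μ/2)‖z − y‖²` for all `z, y`. -/
def StrConvVh {nx nu : ℕ} (μ : ℝ) (f : HParams nx nu → ℝ) : Prop :=
  ∀ z y : HParams nx nu, f z - f y ≥ (fderiv ℝ f y) (z - y) + μ / 2 * pNsq (z - y)

/-- The rotation matrix `T_w^m = [[cos w · I, −sin w · I], [sin w · I, cos w · I]] ∈ ℝ^{2m×2m}`. -/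
noncomputable def TwMat (m : ℕ) (w : ℝ) : Matrix (Fin m ⊕ Fin m) (Fin m ⊕ Fin m) ℝ :=
  Matrix.fromBlocks (Real.cos w • (1 : Matrix (Fin m) (Fin m) ℝ))
    (-(Real.sin w • (1 : Matrix (Fin m) (Fin m) ℝ)))
    (Real.sin w • (1 : Matrix (Fin m) (Fin m) ℝ))
    (Real.cos w • (1 : Matrix (Fin m) (Fin m) ℝ))

/-- The matrix `T̂_w^m = diag(I_m, T_w^m) ∈ ℝ^{3m×3m}`. -/
noncomputable def ThatMat (m : ℕ) (w : ℝ) :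
    Matrix (Fin m ⊕ (Fin m ⊕ Fin m)) (Fin m ⊕ (Fin m ⊕ Fin m)) ℝ :=
  Matrix.fromBlocks (1 : Matrix (Fin m) (Fin m) ℝ) 0 0 (TwMat m w)

section AuxStatement15

private lemma nsq_nonneg' {n : ℕ} (v : RVec n) : 0 ≤ nsq v :=
  Finset.sum_nonneg fun _ _ => sq_nonneg _

private lemma pNsq_nonneg' {nx nu : ℕ} (p : HParams nx nu) : 0 ≤ pNsq p := by
  unfold pNsq
  have h1 := nsq_nonneg' p.1.1
  have h2 := nsq_nonneg' p.1.2.1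
  have h3 := nsq_nonneg' p.1.2.2
  have h4 := nsq_nonneg' p.2.1
  have h5 := nsq_nonneg' p.2.2.1
  have h6 := nsq_nonneg' p.2.2.2
  linarith

private lemma nsq_smul' {n : ℕ} (c : ℝ) (v : RVec n) : nsq (c • v) = c ^ 2 * nsq v := by
  simp [nsq, Finset.mul_sum, mul_pow]

private lemma pNsq_smul' {nx nu : ℕ} (c : ℝ) (p : HParams nx nu) :
    pNsq (c • p) = c ^ 2 * pNsq p := by
  simp only [pNsq, Prod.smul_fst, Prod.smul_snd, nsq_smul']
  ring

private lemma quadForm_nonneg' {n : ℕ} {M : Matrix (Fin n) (Fin n) ℝ} (hM : M.PosDef)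
    (v : RVec n) : 0 ≤ quadForm M v := by
  simpa [quadForm] using hM.posSemidef.dotProduct_mulVec_nonneg v

private lemma soc_tri (a b a' b' : ℝ) :
    Real.sqrt ((a + a') ^ 2 + (b + b') ^ 2)
      ≤ Real.sqrt (a ^ 2 + b ^ 2) + Real.sqrt (a' ^ 2 + b' ^ 2) := by
  have h1 : 0 ≤ Real.sqrt (a ^ 2 + b ^ 2) := Real.sqrt_nonneg _
  have h2 : 0 ≤ Real.sqrt (a' ^ 2 + b' ^ 2) := Real.sqrt_nonneg _
  have e1 : Real.sqrt (a ^ 2 + b ^ 2) ^ 2 = a ^ 2 + b ^ 2 := Real.sq_sqrt (by positivity)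
  have e2 : Real.sqrt (a' ^ 2 + b' ^ 2) ^ 2 = a' ^ 2 + b' ^ 2 := Real.sq_sqrt (by positivity)
  have hcs : a * a' + b * b' ≤ Real.sqrt (a ^ 2 + b ^ 2) * Real.sqrt (a' ^ 2 + b' ^ 2) := by
    rcases le_or_gt (a * a' + b * b') 0 with h | h
    · exact h.trans (mul_nonneg h1 h2)
    · nlinarith [sq_nonneg (a * b' - a' * b), mul_nonneg h1 h2]
  have hle : (a + a') ^ 2 + (b + b') ^ 2
      ≤ (Real.sqrt (a ^ 2 + b ^ 2) + Real.sqrt (a' ^ 2 + b' ^ 2)) ^ 2 := by nlinarith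
  calc Real.sqrt ((a + a') ^ 2 + (b + b') ^ 2)
      ≤ Real.sqrt ((Real.sqrt (a ^ 2 + b ^ 2) + Real.sqrt (a' ^ 2 + b' ^ 2)) ^ 2) :=
        Real.sqrt_le_sqrt hle
    _ = Real.sqrt (a ^ 2 + b ^ 2) + Real.sqrt (a' ^ 2 + b' ^ 2) := Real.sqrt_sq (by linarith)

private lemma soc_comb (t a b a' b' u u' : ℝ) (ht0 : 0 ≤ t) (ht1 : t ≤ 1)
    (h : Real.sqrt (a ^ 2 + b ^ 2) ≤ u) (h' : Real.sqrt (a' ^ 2 + b' ^ 2) ≤ u') :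
    Real.sqrt (((1 - t) * a + t * a') ^ 2 + ((1 - t) * b + t * b') ^ 2)
      ≤ (1 - t) * u + t * u' := by
  have e : ∀ c x y : ℝ, 0 ≤ c →
      Real.sqrt ((c * x) ^ 2 + (c * y) ^ 2) = c * Real.sqrt (x ^ 2 + y ^ 2) := by
    intro c x y hc
    rw [show (c * x) ^ 2 + (c * y) ^ 2 = c ^ 2 * (x ^ 2 + y ^ 2) by ring,
      Real.sqrt_mul (sq_nonneg c), Real.sqrt_sq hc]
  calc Real.sqrt (((1 - t) * a + t * a') ^ 2 + ((1 - t) * b + t * b') ^ 2)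
      ≤ Real.sqrt (((1 - t) * a) ^ 2 + ((1 - t) * b) ^ 2)
          + Real.sqrt ((t * a') ^ 2 + (t * b') ^ 2) := soc_tri _ _ _ _
    _ = (1 - t) * Real.sqrt (a ^ 2 + b ^ 2) + t * Real.sqrt (a' ^ 2 + b' ^ 2) := by
        rw [e _ _ _ (by linarith), e _ _ _ ht0]
    _ ≤ (1 - t) * u + t * u' :=
        add_le_add (mul_le_mul_of_nonneg_left h (by linarith))
          (mul_le_mul_of_nonneg_left h' ht0)

private lemma mulVec_comb {n m k : ℕ} (t : ℝ) (M : Matrix (Fin k) (Fin n) ℝ)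
    (Nm : Matrix (Fin k) (Fin m) ℝ) (v v' : RVec n) (u u' : RVec m) (i : Fin k) :
    (M.mulVec ((1 - t) • v + t • v') + Nm.mulVec ((1 - t) • u + t • u')) i
      = (1 - t) * (M.mulVec v + Nm.mulVec u) i + t * (M.mulVec v' + Nm.mulVec u') i := by
  simp [Matrix.mulVec_add, Matrix.mulVec_smul]
  ring

private lemma paramSet_convex' {nx nu ny : ℕ} (A : Matrix (Fin nx) (Fin nx) ℝ)
    (B : Matrix (Fin nx) (Fin nu) ℝ) (E : Matrix (Fin ny) (Fin nx) ℝ)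
    (F : Matrix (Fin ny) (Fin nu) ℝ) (ylo yhi : RVec ny) (w σ : ℝ)
    (t : ℝ) (ht0 : 0 ≤ t) (ht1 : t ≤ 1) {p q : HParams nx nu}
    (hp : p ∈ paramSet A B E F ylo yhi w σ) (hq : q ∈ paramSet A B E F ylo yhi w σ) :
    (1 - t) • q + t • p ∈ paramSet A B E F ylo yhi w σ := by
  obtain ⟨hpD, hpC⟩ := hp
  obtain ⟨hqD, hqC⟩ := hq
  refine ⟨⟨?_, ?_, ?_⟩, ?_⟩
  · simp only [Prod.fst_add, Prod.snd_add, Prod.smul_fst, Prod.smul_snd]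
    calc (1 - t) • q.1.1 + t • p.1.1
        = (1 - t) • (A.mulVec q.1.1 + B.mulVec q.2.1)
            + t • (A.mulVec p.1.1 + B.mulVec p.2.1) := by rw [← hpD.1, ← hqD.1]
      _ = A.mulVec ((1 - t) • q.1.1 + t • p.1.1) + B.mulVec ((1 - t) • q.2.1 + t • p.2.1) := by
          simp only [Matrix.mulVec_add, Matrix.mulVec_smul]; module
  · simp only [Prod.fst_add, Prod.snd_add, Prod.smul_fst, Prod.smul_snd]
    calc Real.cos w • ((1 - t) • q.1.2.1 + t • p.1.2.1)
          - Real.sin w • ((1 - t) • q.1.2.2 + t • p.1.2.2)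
        = (1 - t) • (Real.cos w • q.1.2.1 - Real.sin w • q.1.2.2)
            + t • (Real.cos w • p.1.2.1 - Real.sin w • p.1.2.2) := by module
      _ = (1 - t) • (A.mulVec q.1.2.1 + B.mulVec q.2.2.1)
            + t • (A.mulVec p.1.2.1 + B.mulVec p.2.2.1) := by rw [hpD.2.1, hqD.2.1]
      _ = A.mulVec ((1 - t) • q.1.2.1 + t • p.1.2.1)
            + B.mulVec ((1 - t) • q.2.2.1 + t • p.2.2.1) := by
          simp only [Matrix.mulVec_add, Matrix.mulVec_smul]; module
  · simp only [Prod.fst_add, Prod.snd_add, Prod.smul_fst, Prod.smul_snd]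
    calc Real.sin w • ((1 - t) • q.1.2.1 + t • p.1.2.1)
          + Real.cos w • ((1 - t) • q.1.2.2 + t • p.1.2.2)
        = (1 - t) • (Real.sin w • q.1.2.1 + Real.cos w • q.1.2.2)
            + t • (Real.sin w • p.1.2.1 + Real.cos w • p.1.2.2) := by module
      _ = (1 - t) • (A.mulVec q.1.2.2 + B.mulVec q.2.2.2)
            + t • (A.mulVec p.1.2.2 + B.mulVec p.2.2.2) := by rw [hpD.2.2, hqD.2.2]
      _ = A.mulVec ((1 - t) • q.1.2.2 + t • p.1.2.2)
            + B.mulVec ((1 - t) • q.2.2.2 + t • p.2.2.2) := by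
          simp only [Matrix.mulVec_add, Matrix.mulVec_smul]; module
  · intro i
    obtain ⟨hq1, hq2⟩ := hqC i
    obtain ⟨hp1, hp2⟩ := hpC i
    constructor
    · have h := soc_comb t _ _ _ _ _ _ ht0 ht1 hq1 hp1
      simp only [Prod.fst_add, Prod.snd_add, Prod.smul_fst, Prod.smul_snd, mulVec_comb]
      linarith [h]
    · have h := soc_comb t _ _ _ _ _ _ ht0 ht1 hq2 hp2
      simp only [Prod.fst_add, Prod.snd_add, Prod.smul_fst, Prod.smul_snd, mulVec_comb]
      linarith [h]

private lemma sum_bound' {n : ℕ} (lam μ c0 : ℝ) (hc0lam : c0 ≤ lam) (hc0mu : c0 ≤ μ / 4)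
    (hc0 : 0 ≤ c0) (a b c : RVec n) :
    1 / 2 * c0 * nsq (a + b + c) ≤ lam * nsq a + μ / 2 * nsq b + μ / 2 * nsq c := by
  have hpt : ∀ i : Fin n, 1 / 2 * c0 * ((a + b + c) i) ^ 2
      ≤ lam * (a i) ^ 2 + μ / 2 * (b i) ^ 2 + μ / 2 * (c i) ^ 2 := by
    intro i
    have e : (a + b + c) i = a i + b i + c i := rfl
    rw [e]
    nlinarith [sq_nonneg (a i - b i - c i), sq_nonneg (b i - c i), sq_nonneg (a i),
      sq_nonneg (b i), sq_nonneg (c i), sq_nonneg (a i + b i + c i)]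
  calc 1 / 2 * c0 * nsq (a + b + c) = ∑ i, 1 / 2 * c0 * ((a + b + c) i) ^ 2 := by
        rw [nsq, Finset.mul_sum]
    _ ≤ ∑ i, (lam * (a i) ^ 2 + μ / 2 * (b i) ^ 2 + μ / 2 * (c i) ^ 2) :=
        Finset.sum_le_sum fun i _ => hpt i
    _ = lam * nsq a + μ / 2 * nsq b + μ / 2 * nsq c := by
        simp [nsq, Finset.mul_sum, Finset.sum_add_distrib]

end AuxStatement15

/-- lower bound on the optimal cost: there is `c > 0` such that
`H*(x; r) − V_h(x̊, ů) ≥ c ‖x − (x̊_e + x̊_c)‖²` for all feasible `x`; in particular one may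
take `c = (1/2) min{λ_min(Q), μ/4}`, where `λ_min(Q)` is the smallest eigenvalue of `Q`
(characterized by `lam`) and `V_h` is `μ`-strongly convex. -/
theorem statement15 {nx nu ny : ℕ}
    (A : Matrix (Fin nx) (Fin nx) ℝ) (B : Matrix (Fin nx) (Fin nu) ℝ)
    (E : Matrix (Fin ny) (Fin nx) ℝ) (F : Matrix (Fin ny) (Fin nu) ℝ)
    (ylo yhi : RVec ny) (hy : ∀ i, ylo i < yhi i)
    (w σ : ℝ) (hw : 0 < w) (hσ : 0 < σ) (N : ℕ) (hN : 1 ≤ N)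
    (Q Te Th : Matrix (Fin nx) (Fin nx) ℝ) (R Se Sh : Matrix (Fin nu) (Fin nu) ℝ)
    (hQ : Q.PosDef) (hR : R.PosDef) (hTe : Te.PosDef) (hSe : Se.PosDef)
    (hTh : Th.PosDef) (hThd : Th.IsDiag) (hSh : Sh.PosDef) (hShd : Sh.IsDiag)
    (hne : (paramSet A B E F ylo yhi w σ).Nonempty)
    (r : HParams nx nu)
    (μ : ℝ) (hμ : 0 < μ) (hsc : StrConvVh μ (Vh Te Th Se Sh r))
    (lam : ℝ) (hlam : 0 < lam)
    (hlamLB : ∀ v : RVec nx, lam * nsq v ≤ quadForm Q v)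
    (hlamEq : ∃ v : RVec nx, v ≠ 0 ∧ quadForm Q v = lam * nsq v)
    (rmin : HParams nx nu)
    (hrmin : IsUniqueMinOn (Vh Te Th Se Sh r) (paramSet A B E F ylo yhi w σ) rmin) :
    (∃ c > (0 : ℝ), ∀ x : RVec nx, Feasible A B E F ylo yhi w σ N x →
        Hstar A B E F ylo yhi Q Te Th R Se Sh w σ N r x - Vh Te Th Se Sh r rmin
          ≥ c * nsq (x - (rmin.1.1 + rmin.1.2.2))) ∧
    (∀ x : RVec nx, Feasible A B E F ylo yhi w σ N x →
        Hstar A B E F ylo yhi Q Te Th R Se Sh w σ N r x - Vh Te Th Se Sh r rmin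
          ≥ (1 / 2) * min lam (μ / 4) * nsq (x - (rmin.1.1 + rmin.1.2.2))) := by
  have hmin_le : ∀ q ∈ paramSet A B E F ylo yhi w σ,
      Vh Te Th Se Sh r rmin ≤ Vh Te Th Se Sh r q := by
    intro q hq
    rcases eq_or_ne q rmin with h | h
    · rw [h]
    · exact (hrmin.2 q hq h).le
  have growth : ∀ p ∈ paramSet A B E F ylo yhi w σ,
      μ / 2 * pNsq (p - rmin) ≤ Vh Te Th Se Sh r p - Vh Te Th Se Sh r rmin := by
    intro p hp
    have hS0 : 0 ≤ pNsq (p - rmin) := pNsq_nonneg' _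
    have key : ∀ t : ℝ, 0 < t → t < 1 →
        μ / 2 * (1 - t) * pNsq (p - rmin)
          ≤ Vh Te Th Se Sh r p - Vh Te Th Se Sh r rmin := by
      intro t ht0 ht1
      set y : HParams nx nu := rmin + t • (p - rmin) with hy
      have hyS : y ∈ paramSet A B E F ylo yhi w σ := by
        have h := paramSet_convex' A B E F ylo yhi w σ t ht0.le ht1.le hp hrmin.1
        have e : (1 - t) • rmin + t • p = y := by rw [hy]; module
        rwa [e] at h
      have h1 := hsc rmin y
      have h2 := hsc p y
      have e1 : rmin - y = (-t) • (p - rmin) := by rw [hy]; module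
      have e2 : p - y = (1 - t) • (p - rmin) := by rw [hy]; module
      rw [e1] at h1
      rw [e2] at h2
      rw [pNsq_smul'] at h1 h2
      simp only [_root_.map_smul, smul_eq_mul] at h1 h2
      have hy_ge : Vh Te Th Se Sh r rmin ≤ Vh Te Th Se Sh r y := hmin_le y hyS
      have h1t : (0 : ℝ) ≤ 1 - t := by linarith
      have hfin : t * (μ / 2 * (1 - t) * pNsq (p - rmin))
          ≤ t * (Vh Te Th Se Sh r p - Vh Te Th Se Sh r rmin) := by
        nlinarith [mul_le_mul_of_nonneg_left h1 h1t, mul_le_mul_of_nonneg_left h2 ht0.le,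
          hy_ge]
      exact le_of_mul_le_mul_left hfin ht0
    by_contra hcon
    push_neg at hcon
    have hSpos : 0 < pNsq (p - rmin) := by
      rcases hS0.lt_or_eq with h | h
      · exact h
      · exfalso
        have hk := key (1 / 2) (by norm_num) (by norm_num)
        rw [← h] at hk hcon
        linarith
    have hεpos : 0 < μ / 2 * pNsq (p - rmin)
        - (Vh Te Th Se Sh r p - Vh Te Th Se Sh r rmin) := by linarith
    set ε := μ / 2 * pNsq (p - rmin) - (Vh Te Th Se Sh r p - Vh Te Th Se Sh r rmin) with hε
    have htpos : 0 < min (1 / 2 : ℝ) (ε / (μ * pNsq (p - rmin))) :=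
      lt_min (by norm_num) (div_pos hεpos (mul_pos hμ hSpos))
    have htlt : min (1 / 2 : ℝ) (ε / (μ * pNsq (p - rmin))) < 1 :=
      lt_of_le_of_lt (min_le_left _ _) (by norm_num)
    have hk := key _ htpos htlt
    have hle : min (1 / 2 : ℝ) (ε / (μ * pNsq (p - rmin))) ≤ ε / (μ * pNsq (p - rmin)) :=
      min_le_right _ _
    have h2 : min (1 / 2 : ℝ) (ε / (μ * pNsq (p - rmin))) * (μ * pNsq (p - rmin)) ≤ ε :=
      (le_div_iff₀ (mul_pos hμ hSpos)).mp hle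
    linarith
  have main : ∀ x : RVec nx, Feasible A B E F ylo yhi w σ N x →
      Hstar A B E F ylo yhi Q Te Th R Se Sh w σ N r x - Vh Te Th Se Sh r rmin
        ≥ 1 / 2 * min lam (μ / 4) * nsq (x - (rmin.1.1 + rmin.1.2.2)) := by
    intro x hx
    have hLB : ∀ xs us p, FeasSol A B E F ylo yhi w σ N x xs us p →
        Vh Te Th Se Sh r rmin + 1 / 2 * min lam (μ / 4) * nsq (x - (rmin.1.1 + rmin.1.2.2))
          ≤ Jcost Q Te Th R Se Sh w N r xs us p := by
      intro xs us p hfs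
      obtain ⟨h0, hdyn, hcon, hT, hD, hC⟩ := hfs
      have hpS : p ∈ paramSet A B E F ylo yhi w σ := ⟨hD, hC⟩
      have hterm := Finset.single_le_sum
        (f := fun k => quadForm Q (xs k - hSeq w p.1 k) + quadForm R (us k - hSeq w p.2 k))
        (fun k _ => add_nonneg (quadForm_nonneg' hQ _) (quadForm_nonneg' hR _))
        (Finset.mem_range.mpr (by omega : 0 < N))
      have hR0 : 0 ≤ quadForm R (us 0 - hSeq w p.2 0) := quadForm_nonneg' hR _
      have hseq0 : hSeq w p.1 0 = p.1.1 + p.1.2.2 := by simp [hSeq]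
      have hQ0 : lam * nsq (x - (p.1.1 + p.1.2.2)) ≤ quadForm Q (xs 0 - hSeq w p.1 0) := by
        rw [h0, hseq0]; exact hlamLB _
      have hVh := growth p hpS
      have esplit : pNsq (p - rmin) = nsq (p.1.1 - rmin.1.1) + nsq (p.1.2.1 - rmin.1.2.1)
          + nsq (p.1.2.2 - rmin.1.2.2) + nsq (p.2.1 - rmin.2.1) + nsq (p.2.2.1 - rmin.2.2.1)
          + nsq (p.2.2.2 - rmin.2.2.2) := rfl
      have hsplitμ : μ / 2 * (nsq (p.1.1 - rmin.1.1) + nsq (p.1.2.2 - rmin.1.2.2))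
          ≤ μ / 2 * pNsq (p - rmin) := by
        apply mul_le_mul_of_nonneg_left _ (by linarith : (0 : ℝ) ≤ μ / 2)
        rw [esplit]
        have h1 := nsq_nonneg' (p.1.2.1 - rmin.1.2.1)
        have h2 := nsq_nonneg' (p.2.1 - rmin.2.1)
        have h3 := nsq_nonneg' (p.2.2.1 - rmin.2.2.1)
        have h4 := nsq_nonneg' (p.2.2.2 - rmin.2.2.2)
        linarith
      have hsum : x - (rmin.1.1 + rmin.1.2.2)
          = (x - (p.1.1 + p.1.2.2)) + (p.1.1 - rmin.1.1) + (p.1.2.2 - rmin.1.2.2) := by abel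
      have hkey : 1 / 2 * min lam (μ / 4) * nsq (x - (rmin.1.1 + rmin.1.2.2))
          ≤ lam * nsq (x - (p.1.1 + p.1.2.2)) + μ / 2 * nsq (p.1.1 - rmin.1.1)
            + μ / 2 * nsq (p.1.2.2 - rmin.1.2.2) := by
        rw [hsum]
        exact sum_bound' lam μ _ (min_le_left _ _) (min_le_right _ _)
          (le_of_lt (lt_min hlam (by linarith))) _ _ _
      have hterm' : quadForm Q (xs 0 - hSeq w p.1 0) + quadForm R (us 0 - hSeq w p.2 0)
          ≤ ∑ k ∈ Finset.range N,
            (quadForm Q (xs k - hSeq w p.1 k) + quadForm R (us k - hSeq w p.2 k)) := hterm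
      unfold Jcost
      linarith [hterm', hR0, hQ0, hVh, hsplitμ, hkey]
    obtain ⟨xs0, us0, p0, hfs0⟩ := hx
    have hnonempty : {J : ℝ | ∃ xs us p, FeasSol A B E F ylo yhi w σ N x xs us p ∧
        J = Jcost Q Te Th R Se Sh w N r xs us p}.Nonempty := ⟨_, xs0, us0, p0, hfs0, rfl⟩
    have hcs : Vh Te Th Se Sh r rmin
        + 1 / 2 * min lam (μ / 4) * nsq (x - (rmin.1.1 + rmin.1.2.2))
        ≤ Hstar A B E F ylo yhi Q Te Th R Se Sh w σ N r x := by
      unfold Hstar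
      refine le_csInf hnonempty ?_
      rintro J ⟨xs, us, p, hf, rfl⟩
      exact hLB xs us p hf
    linarith
  refine ⟨⟨1 / 2 * min lam (μ / 4), ?_, main⟩, main⟩
  have : 0 < min lam (μ / 4) := lt_min hlam (by linarith)
  linarith
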